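/- Let (Ω, μ) be a probability space and X : Ω → ℝᵖ a random vector with E‖X‖² < ∞. Let B be a real p×d matrix and set Z := BᵀX (so Z_k = Σ_j B_{jk} X_j). Suppose there exist c₀ ∈ ℝᵖ and a real p×d matrix C such that the conditional expectation of X given the σ-algebra generated by Z satisfies E[X | σ(Z)] = c₀ + C·Z almost everywhere. Then Σ·B = C·(Bᵀ·Σ·B), where Σ is the covariance matrix of X, with entries Σ_{ij} = E[X_i X_j] − E[X_i]E[X_j]. -/

import Mathlib

open MeasureTheory Matrix

lemma integrable_mul_of_memL2 {Ω : Type*} {mΩ : MeasurableSpace Ω} {μ : Measure Ω}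
    {f g : Ω → ℝ} (hf : MemLp f 2 μ) (hg : MemLp g 2 μ) :
    Integrable (fun ω => f ω * g ω) μ := by
  have h : MemLp (g • f) 1 μ :=
    MemLp.smul hf hg
  have := memLp_one_iff_integrable.mp h
  simpa [smul_eq_mul, mul_comm, Pi.mul_def] using this

lemma alg_aux {p d : ℕ} (B : Matrix (Fin p) (Fin d) ℝ)
    (Cov' mXX' : Fin p → Fin p → ℝ) (mX' : Fin p → ℝ)
    (h : ∀ a b, Cov' a b = mXX' a b - mX' a * mX' b) (k l : Fin d) :
    (∑ j', (∑ j, B j k * Cov' j j') * B j' l)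
      = (∑ j, B j k * ∑ j', B j' l * mXX' j j')
        - (∑ j, B j k * mX' j) * (∑ j', B j' l * mX' j') := by
  have e1 : (∑ j', (∑ j, B j k * Cov' j j') * B j' l)
      = ∑ j, ∑ j', B j k * B j' l * Cov' j j' := by
    simp only [Finset.sum_mul]
    rw [Finset.sum_comm]
    exact Finset.sum_congr rfl fun j _ => Finset.sum_congr rfl fun j' _ => by ring
  have e2 : (∑ j, B j k * ∑ j', B j' l * mXX' j j')
      = ∑ j, ∑ j', B j k * B j' l * mXX' j j' := by
    simp only [Finset.mul_sum]
    exact Finset.sum_congr rfl fun j _ => Finset.sum_congr rfl fun j' _ => by ring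
  have e3 : (∑ j, B j k * mX' j) * (∑ j', B j' l * mX' j')
      = ∑ j, ∑ j', B j k * B j' l * (mX' j * mX' j') := by
    rw [Finset.sum_mul]
    refine Finset.sum_congr rfl fun j _ => ?_
    rw [Finset.mul_sum]
    exact Finset.sum_congr rfl fun j' _ => by ring
  rw [e1, e2, e3, ← Finset.sum_sub_distrib]
  refine Finset.sum_congr rfl fun j _ => ?_
  rw [← Finset.sum_sub_distrib]
  refine Finset.sum_congr rfl fun j' _ => ?_
  rw [h]; ring

/-- Linearity condition: if `E[X | σ(BᵀX)] = c₀ + C·(BᵀX)` a.e., then `Σ·B = C·(Bᵀ·Σ·B)`,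
where `Σ` is the covariance matrix of `X`. -/
theorem stmt_4 {Ω : Type*} {mΩ : MeasurableSpace Ω} (μ : Measure Ω) [IsProbabilityMeasure μ]
    {p d : ℕ} (X : Ω → Fin p → ℝ) (hXmeas : Measurable X)
    (hX2 : ∀ i, MemLp (fun ω => X ω i) 2 μ)
    (B : Matrix (Fin p) (Fin d) ℝ)
    (Z : Ω → Fin d → ℝ) (hZ : Z = fun ω k => ∑ j, B j k * X ω j)
    (c₀ : Fin p → ℝ) (C : Matrix (Fin p) (Fin d) ℝ)
    (hlin : ∀ i, μ[fun ω => X ω i | MeasurableSpace.comap Z inferInstance]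
      =ᵐ[μ] fun ω => c₀ i + ∑ k, C i k * Z ω k)
    (Cov : Matrix (Fin p) (Fin p) ℝ)
    (hCov : Cov = fun i j =>
      (∫ ω, X ω i * X ω j ∂μ) - (∫ ω, X ω i ∂μ) * (∫ ω, X ω j ∂μ)) :
    Cov * B = C * (Bᵀ * Cov * B) := by
  -- abbreviations
  set mX : Fin p → ℝ := fun i => ∫ ω, X ω i ∂μ with hmX
  set mXX : Fin p → Fin p → ℝ := fun i j => ∫ ω, X ω i * X ω j ∂μ with hmXX
  -- Z is measurable
  have hZmeas : Measurable Z := by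
    subst hZ
    exact measurable_pi_lambda _ fun k =>
      Finset.measurable_sum _ fun j _ => (hXmeas.eval).const_mul _
  set m : MeasurableSpace Ω := MeasurableSpace.comap Z inferInstance with hm'
  have hm : m ≤ mΩ := hZmeas.comap_le
  haveI : SigmaFinite (μ.trim hm) := inferInstance
  -- each Z k is in L²
  have hZ2 : ∀ k, MemLp (fun ω => Z ω k) 2 μ := by
    intro k
    have h := memLp_finset_sum' (μ := μ) (p := 2) Finset.univ
      (f := fun j (ω : Ω) => B j k * X ω j) (fun j _ => (hX2 j).const_mul (B j k))
    have he : (∑ j : Fin p, fun (ω : Ω) => B j k * X ω j) = fun ω => Z ω k := by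
      funext ω
      simp [hZ, Finset.sum_apply]
    rwa [he] at h
  -- Z k is strongly measurable wrt m
  have hZm : @Measurable Ω (Fin d → ℝ) m _ Z := measurable_iff_comap_le.mpr le_rfl
  have hZsm : ∀ k, StronglyMeasurable[m] (fun ω => Z ω k) := fun k =>
    ((measurable_pi_apply k).comp hZm).stronglyMeasurable
  -- integrabilities
  have hXint : ∀ i, Integrable (fun ω => X ω i) μ := fun i => (hX2 i).integrable (by norm_num)
  have hZint : ∀ k, Integrable (fun ω => Z ω k) μ := fun k => (hZ2 k).integrable (by norm_num)
  have hXXint : ∀ i j, Integrable (fun ω => X ω i * X ω j) μ :=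
    fun i j => integrable_mul_of_memL2 (hX2 i) (hX2 j)
  have hZXint : ∀ k i, Integrable (fun ω => Z ω k * X ω i) μ :=
    fun k i => integrable_mul_of_memL2 (hZ2 k) (hX2 i)
  have hZZint : ∀ k l, Integrable (fun ω => Z ω k * Z ω l) μ :=
    fun k l => integrable_mul_of_memL2 (hZ2 k) (hZ2 l)
  -- integral of Z
  have hIZ : ∀ k, ∫ ω, Z ω k ∂μ = ∑ j, B j k * mX j := by
    intro k
    simp only [hZ]
    rw [integral_finset_sum _ fun j _ => (hXint j).const_mul (B j k)]
    exact Finset.sum_congr rfl fun j _ => integral_const_mul _ _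
  -- integral of X i * Z l
  have hIXZ : ∀ i l, ∫ ω, X ω i * Z ω l ∂μ = ∑ j, B j l * mXX i j := by
    intro i l
    have e : (fun ω => X ω i * Z ω l) = fun ω => ∑ j, B j l * (X ω i * X ω j) := by
      funext ω
      simp only [hZ, Finset.mul_sum]
      exact Finset.sum_congr rfl fun j _ => by ring
    rw [e, integral_finset_sum _ fun j _ => (hXXint i j).const_mul (B j l)]
    exact Finset.sum_congr rfl fun j _ => integral_const_mul _ _
  -- integral of Z k * Z l
  have hIZZ : ∀ k l, ∫ ω, Z ω k * Z ω l ∂μ = ∑ j, B j k * ∑ j', B j' l * mXX j j' := by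
    intro k l
    have e : (fun ω => Z ω k * Z ω l) = fun ω => ∑ j, B j k * (X ω j * Z ω l) := by
      funext ω
      nth_rewrite 1 [hZ]
      simp only [Finset.sum_mul]
      exact Finset.sum_congr rfl fun j _ => by ring
    rw [e, integral_finset_sum _ fun j _ =>
      (integrable_mul_of_memL2 (hX2 j) (hZ2 l)).const_mul (B j k)]
    refine Finset.sum_congr rfl fun j _ => ?_
    rw [integral_const_mul, hIXZ j l]
  -- tower property: E[X i] = c₀ i + ∑ k C i k E[Z k]
  have h1 : ∀ i, mX i = c₀ i + ∑ k, C i k * ∑ j, B j k * mX j := by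
    intro i
    have ht := integral_condExp hm (μ := μ) (f := fun ω => X ω i)
    rw [hmX]
    calc (∫ ω, X ω i ∂μ) = ∫ ω, (μ[fun ω => X ω i | m]) ω ∂μ := ht.symm
    _ = ∫ ω, (c₀ i + ∑ k, C i k * Z ω k) ∂μ := integral_congr_ae (hlin i)
    _ = c₀ i + ∑ k, C i k * ∑ j, B j k * mX j := by
        rw [integral_add (integrable_const _)
          (integrable_finset_sum _ fun k _ => (hZint k).const_mul _),
          integral_finset_sum _ fun k _ => (hZint k).const_mul _]
        simp only [integral_const, probReal_univ, ENNReal.toReal_one, smul_eq_mul, one_mul]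
        congr 1
        exact Finset.sum_congr rfl fun k _ => by rw [integral_const_mul, hIZ k]
  -- pull-out property: E[X i Z l] = c₀ i E[Z l] + ∑ k C i k E[Z k Z l]
  have h2 : ∀ i l, (∑ j, B j l * mXX i j)
      = c₀ i * (∑ j, B j l * mX j)
        + ∑ k, C i k * ∑ j, B j k * ∑ j', B j' l * mXX j j' := by
    intro i l
    have key : ∫ ω, X ω i * Z ω l ∂μ
        = ∫ ω, Z ω l * (c₀ i + ∑ k, C i k * Z ω k) ∂μ := by
      have hmul : μ[(fun ω => Z ω l) * (fun ω => X ω i) | m]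
          =ᵐ[μ] (fun ω => Z ω l) * μ[fun ω => X ω i | m] :=
        condExp_mul_of_stronglyMeasurable_left (hZsm l) (by simpa [Pi.mul_def] using hZXint l i)
          (hXint i)
      have hmul' : (fun ω => Z ω l) * μ[fun ω => X ω i | m]
          =ᵐ[μ] fun ω => Z ω l * (c₀ i + ∑ k, C i k * Z ω k) := by
        filter_upwards [hlin i] with ω hω
        simp [Pi.mul_apply, hω]
      calc ∫ ω, X ω i * Z ω l ∂μ = ∫ ω, Z ω l * X ω i ∂μ := by
            congr 1; funext ω; ring
      _ = ∫ ω, (μ[(fun ω => Z ω l) * (fun ω => X ω i) | m]) ω ∂μ := by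
            rw [integral_condExp hm]; rfl
      _ = ∫ ω, Z ω l * (c₀ i + ∑ k, C i k * Z ω k) ∂μ :=
            integral_congr_ae (hmul.trans hmul')
    have expand : ∫ ω, Z ω l * (c₀ i + ∑ k, C i k * Z ω k) ∂μ
        = c₀ i * (∑ j, B j l * mX j)
          + ∑ k, C i k * ∑ j, B j k * ∑ j', B j' l * mXX j j' := by
      have e : (fun ω => Z ω l * (c₀ i + ∑ k, C i k * Z ω k))
          = fun ω => c₀ i * Z ω l + ∑ k, C i k * (Z ω k * Z ω l) := by
        funext ω
        rw [mul_add, Finset.mul_sum]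
        congr 1
        · ring
        · exact Finset.sum_congr rfl fun k _ => by ring
      rw [e, integral_add ((hZint l).const_mul _)
        (integrable_finset_sum _ fun k _ => (hZZint k l).const_mul _),
        integral_finset_sum _ fun k _ => (hZZint k l).const_mul _]
      congr 1
      · rw [integral_const_mul, hIZ l]
      · exact Finset.sum_congr rfl fun k _ => by rw [integral_const_mul, hIZZ k l]
    rw [← hIXZ i l, key, expand]
  -- now pure algebra
  funext i l
  simp only [Matrix.mul_apply, Matrix.transpose_apply]
  have hCovE : ∀ a b, Cov a b = mXX a b - mX a * mX b := by
    intro a b; rw [hCov]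
  -- rewrite LHS
  have lhs_eq : (∑ j, Cov i j * B j l)
      = (∑ j, B j l * mXX i j) - mX i * (∑ j, B j l * mX j) := by
    rw [Finset.mul_sum, ← Finset.sum_sub_distrib]
    exact Finset.sum_congr rfl fun j _ => by rw [hCovE]; ring
  have rhs_eq : (∑ k, C i k * ∑ j', (∑ j, B j k * Cov j j') * B j' l)
      = ∑ k, C i k * ((∑ j, B j k * ∑ j', B j' l * mXX j j')
          - (∑ j, B j k * mX j) * (∑ j', B j' l * mX j')) := by
    refine Finset.sum_congr rfl fun k _ => ?_
    rw [alg_aux B Cov mXX mX hCovE k l]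
  rw [lhs_eq, rhs_eq, h2 i l, h1 i]
  have hq : (∑ k, C i k * ∑ j, B j k * mX j) * (∑ j, B j l * mX j)
      = ∑ k, C i k * ((∑ j, B j k * mX j) * (∑ j, B j l * mX j)) := by
    rw [Finset.sum_mul]
    exact Finset.sum_congr rfl fun k _ => by ring
  rw [add_mul, hq]
  simp only [mul_sub]
  rw [Finset.sum_sub_distrib]
  ring
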